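/- Let (Ω, ℱ, P) be a probability space, and let Y : Ω → ℝ, U : Ω → ℝ, D : Ω → 𝒟, X : Ω → 𝒳, Z : Ω → 𝒵 be measurable random elements. Let q : ℝ × 𝒟 × 𝒳 → ℝ be measurable with t ↦ q(t, d, x) nondecreasing on [0,1] for every (d, x). Assume Y = q(U, D, X) P-a.s., U ∈ [0,1] P-a.s., and for every Borel set B ⊆ ℝ, E[1{U ∈ B} | σ(X, Z)] = λ(B ∩ [0,1]) P-a.s., where λ is Lebesgue measure. Let I ⊆ [0,1] be a closed set and suppose the event A_I := {ω ∈ Ω : ∃ t ∈ I, Y(ω) = q(t, D(ω), X(ω))} (i.e., Y ∈ q(I, D, X), the image of I under t ↦ q(t, D, X)) is ℱ-measurable. Then P(U ∈ I) ≤ E[1_{A_I} | σ(X, Z)] P-almost surely. -/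

import Mathlib

open MeasureTheory
open scoped Classical

/-- Theorem 1(iii) of the IVQR model (outcomes possibly with atoms): if `Y = q(U, D, X)` a.s.
with `U` uniform on `(0,1)` conditionally on `(X, Z)` and `t ↦ q(t, d, x)` only nondecreasing
on `[0,1]`, then for any closed set `I ⊆ [0,1]`,
`P(U ∈ I) ≤ P[Y ∈ q(I, D, X) | X, Z]` almost surely. -/
theorem ivqr_closed_set_inequality
    {Ω 𝒟 𝒳 𝒵 : Type*} [MeasurableSpace Ω] [MeasurableSpace 𝒟] [MeasurableSpace 𝒳]
    [MeasurableSpace 𝒵]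
    (P : Measure Ω) [IsProbabilityMeasure P]
    (Y U : Ω → ℝ) (D : Ω → 𝒟) (X : Ω → 𝒳) (Z : Ω → 𝒵)
    (hY : Measurable Y) (hU : Measurable U) (hD : Measurable D)
    (hX : Measurable X) (hZ : Measurable Z)
    (q : ℝ → 𝒟 → 𝒳 → ℝ) (hq : Measurable fun p : ℝ × 𝒟 × 𝒳 => q p.1 p.2.1 p.2.2)
    (hmono : ∀ (d : 𝒟) (x : 𝒳), MonotoneOn (fun t => q t d x) (Set.Icc (0 : ℝ) 1))
    (hrep : ∀ᵐ ω ∂P, Y ω = q (U ω) (D ω) (X ω))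
    (hU01 : ∀ᵐ ω ∂P, U ω ∈ Set.Icc (0 : ℝ) 1)
    (hunif : ∀ B : Set ℝ, MeasurableSet B →
      P[(fun ω => if U ω ∈ B then (1 : ℝ) else 0)
          | MeasurableSpace.comap (fun ω => (X ω, Z ω)) inferInstance]
        =ᵐ[P] fun _ => (MeasureTheory.volume (B ∩ Set.Icc (0 : ℝ) 1)).toReal)
    (I : Set ℝ) (hI : IsClosed I) (hI01 : I ⊆ Set.Icc (0 : ℝ) 1)
    (hAI : MeasurableSet {ω : Ω | ∃ t ∈ I, Y ω = q t (D ω) (X ω)}) :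
    ∀ᵐ ω ∂P, (P {ω' : Ω | U ω' ∈ I}).toReal ≤
      (P[(fun ω' => if ∃ t ∈ I, Y ω' = q t (D ω') (X ω') then (1 : ℝ) else 0)
          | MeasurableSpace.comap (fun ω' => (X ω', Z ω')) inferInstance]) ω := by
  have h𝒢 : MeasurableSpace.comap (fun ω : Ω => (X ω, Z ω)) inferInstance ≤
      ‹MeasurableSpace Ω› := (hX.prodMk hZ).comap_le
  set sI : Set Ω := {ω | U ω ∈ I} with hsIdef
  set sA : Set Ω := {ω : Ω | ∃ t ∈ I, Y ω = q t (D ω) (X ω)} with hsAdef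
  have hsI : MeasurableSet sI := hU hI.measurableSet
  set f : Ω → ℝ := fun ω => if U ω ∈ I then (1 : ℝ) else 0 with hfdef
  set g : Ω → ℝ := fun ω => if ∃ t ∈ I, Y ω = q t (D ω) (X ω) then (1 : ℝ) else 0 with hgdef
  have hfeq : f = sI.indicator (fun _ => (1 : ℝ)) := by
    funext ω; simp [Set.indicator_apply, hfdef, hsIdef]
  have hgeq : g = sA.indicator (fun _ => (1 : ℝ)) := by
    funext ω; simp [Set.indicator_apply, hgdef, hsAdef]
  have hf_int : Integrable f P := by
    rw [hfeq]; exact (integrable_const (1 : ℝ)).indicator hsI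
  have hg_int : Integrable g P := by
    rw [hgeq]; exact (integrable_const (1 : ℝ)).indicator hAI
  have h_le : f ≤ᵐ[P] g := by
    filter_upwards [hrep] with ω hrw
    by_cases h : U ω ∈ I
    · have hA : ∃ t ∈ I, Y ω = q t (D ω) (X ω) := ⟨U ω, h, hrw⟩
      simp [hfdef, hgdef, h, hA]
    · simp only [hfdef, hgdef, h, if_false]
      split_ifs <;> norm_num
  have h_mono : P[f | MeasurableSpace.comap (fun ω : Ω => (X ω, Z ω)) inferInstance] ≤ᵐ[P] P[g | MeasurableSpace.comap (fun ω : Ω => (X ω, Z ω)) inferInstance] := condExp_mono hf_int hg_int h_le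
  have hcond := hunif I hI.measurableSet
  set c : ℝ := (MeasureTheory.volume (I ∩ Set.Icc (0 : ℝ) 1)).toReal with hcdef
  have h_val : (P sI).toReal = c := by
    have h1 : ∫ ω, f ω ∂P = (P sI).toReal := by
      rw [hfeq]
      exact integral_indicator_one (μ := P) hsI
    have h2 : ∫ ω, (P[f | MeasurableSpace.comap (fun ω : Ω => (X ω, Z ω)) inferInstance]) ω ∂P = ∫ ω, f ω ∂P := integral_condExp h𝒢
    have h3 : ∫ ω, (P[f | MeasurableSpace.comap (fun ω : Ω => (X ω, Z ω)) inferInstance]) ω ∂P = ∫ (_ : Ω), c ∂P := integral_congr_ae hcond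
    have h4 : ∫ (_ : Ω), c ∂P = c := by simp
    rw [← h1, ← h2, h3, h4]
  filter_upwards [h_mono, hcond] with ω h1 h2
  rw [h_val, ← h2]
  exact h1
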